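/- Let γ be a connected marked graph with half-edges and 𝒱 ⊆ Ver with 𝒱 ≠ Ver. Then, in ℤ, Σ_{v∈𝒱}(|ε⁻¹(v)| − 3) + |F†_γ(𝒱)| + |E_γ(𝒱)| + |π₀(γ,𝒱)| ≥ 3·(|E_γ(𝒱)| − |𝒱| + |π₀(γ,𝒱)|), where ε⁻¹(v) ⊆ S ⊔ Fl denotes the set of marked labels and flags carried by the vertex v. -/

import Mathlib

/-- The set of edges of a graph with half-edges: unordered pairs `{f, ϑ f}`. -/
def edgeSet {F : Type*} (ϑ : F → F) : Set (Set F) :=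
  {e | ∃ f, e = {f, ϑ f}}

/-- The edges both of whose flags have ε-image in `S`. -/
def edgesIn {V F : Type*} (ε : F → V) (ϑ : F → F) (S : Set V) : Set (Set F) :=
  {e | ∃ f, e = {f, ϑ f} ∧ ε f ∈ S ∧ ε (ϑ f) ∈ S}

/-- One-step adjacency in the graph: `v` and `v'` are the two endpoints of an edge. -/
def Step {V F : Type*} (ε : F → V) (ϑ : F → F) (v v' : V) : Prop :=
  ∃ f, ε f = v ∧ ε (ϑ f) = v'

/-- The graph is connected: any two distinct vertices are joined by a chain of edges. -/
def IsConnectedGraph {V F : Type*} (ε : F → V) (ϑ : F → F) : Prop :=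
  ∀ v v' : V, v ≠ v' → Relation.ReflTransGen (Step ε ϑ) v v'

/-- One-step adjacency within the induced subgraph on the vertex subset `S`. -/
def StepIn {V F : Type*} (ε : F → V) (ϑ : F → F) (S : Set V) (v v' : V) : Prop :=
  v ∈ S ∧ v' ∈ S ∧ ∃ f, ε f = v ∧ ε (ϑ f) = v'

/-- The connected component of `v` in the induced subgraph on `S`. -/
def component {V F : Type*} (ε : F → V) (ϑ : F → F) (S : Set V) (v : V) : Set V :=
  {w | Relation.ReflTransGen (StepIn ε ϑ S) v w}

/-- `π₀(γ,S)`: the set of connected components of the induced subgraph on `S`. -/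
def pi0 {V F : Type*} (ε : F → V) (ϑ : F → F) (S : Set V) : Set (Set V) :=
  {C | ∃ v ∈ S, C = component ε ϑ S v}

/-- The crossing edges of a subset `C` of vertices: edges with exactly one flag
having ε-image in `C`. -/
def crossingEdges {V F : Type*} (ε : F → V) (ϑ : F → F) (C : Set V) : Set (Set F) :=
  {e | ∃ f, e = {f, ϑ f} ∧ ε f ∉ C ∧ ε (ϑ f) ∈ C}

/-- One-step adjacency in the graph obtained by deleting the two flags `f₀`, `ϑ f₀`. -/
def StepAvoid {V F : Type*} (ε : F → V) (ϑ : F → F) (f₀ : F) (v v' : V) : Prop :=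
  ∃ g, g ≠ f₀ ∧ g ≠ ϑ f₀ ∧ ε g = v ∧ ε (ϑ g) = v'

/-- The flag `f₀` disconnects `C` from the rest of the graph: after deleting the flags
`f₀` and `ϑ f₀`, there is no chain of edges from a vertex of `C` to a vertex outside `C`. -/
def Disconnects {V F : Type*} (ε : F → V) (ϑ : F → F) (C : Set V) (f₀ : F) : Prop :=
  ∀ v ∈ C, ∀ v' ∉ C, ¬ Relation.ReflTransGen (StepAvoid ε ϑ f₀) v v'

/-- `F°_γ(S)`: the flags `f` with `ε f ∉ S` that disconnect from the rest of the graph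
the connected component of the induced subgraph on `S` containing `ε (ϑ f)`. -/
def Fcirc {V F : Type*} (ε : F → V) (ϑ : F → F) (S : Set V) : Set F :=
  {f | ε f ∉ S ∧ ε (ϑ f) ∈ S ∧ Disconnects ε ϑ (component ε ϑ S (ε (ϑ f))) f}

/-- `F†_γ(S)`: the flags of `F°_γ(S)` whose associated component carries no marked label. -/
def Fdagger {V F L : Type*} (ε : F → V) (ϑ : F → F) (εS : L → V) (S : Set V) : Set F :=
  {f | f ∈ Fcirc ε ϑ S ∧ ∀ s : L, εS s ∉ component ε ϑ S (ε (ϑ f))}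

section helpers
variable {V F : Type*} {ε : F → V} {ϑ : F → F}

lemma stepIn_symm (hinv : Function.Involutive ϑ) {S : Set V} :
    Symmetric (StepIn ε ϑ S) := by
  rintro a b ⟨ha, hb, f, hf1, hf2⟩
  exact ⟨hb, ha, ϑ f, hf2, by rw [hinv f]; exact hf1⟩

lemma mem_of_mem_component {S : Set V} {v w : V} (hv : v ∈ S)
    (hw : w ∈ component ε ϑ S v) : w ∈ S := by
  simp only [component, Set.mem_setOf_eq] at hw
  induction hw with
  | refl => exact hv
  | tail _ h _ => exact h.2.1

lemma component_eq (hinv : Function.Involutive ϑ) {S : Set V} {v w : V}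
    (hw : w ∈ component ε ϑ S v) : component ε ϑ S w = component ε ϑ S v := by
  have hsym : ∀ {a b}, Relation.ReflTransGen (StepIn ε ϑ S) a b →
      Relation.ReflTransGen (StepIn ε ϑ S) b a := by
    haveI : Std.Symm (StepIn ε ϑ S) := ⟨fun a b h => stepIn_symm (ε := ε) hinv (S := S) h⟩
    exact fun {a b} h => (inferInstance : Std.Symm (Relation.ReflTransGen (StepIn ε ϑ S))).symm _ _ h
  ext x
  exact ⟨fun hx => Relation.ReflTransGen.trans hw hx,
    fun hx => Relation.ReflTransGen.trans (hsym hw) hx⟩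

lemma extend_component {S : Set V} {v : V} {g : F}
    (hg : ε g ∈ component ε ϑ S v) (hv : v ∈ S) (hgS : ε (ϑ g) ∈ S) :
    ε (ϑ g) ∈ component ε ϑ S v :=
  Relation.ReflTransGen.tail hg ⟨mem_of_mem_component hv hg, hgS, g, rfl, rfl⟩

lemma escape {G : Set F} {C : Set V} {u w : V}
    (h : Relation.ReflTransGen (fun a b => ∃ g ∈ G, ε g = a ∧ ε (ϑ g) = b) u w)
    (hu : u ∈ C) (hw : w ∉ C) :
    ∃ g ∈ G, ε g ∈ C ∧ ε (ϑ g) ∉ C := by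
  induction h with
  | refl => exact absurd hu hw
  | tail hab hbc ih =>
    obtain ⟨g, hg, hg1, hg2⟩ := hbc
    by_cases hb : ε g ∈ C
    · exact ⟨g, hg, hb, hg2 ▸ hw⟩
    · exact ih (hg1 ▸ hb)

lemma ncard_filter {α : Type*} [Fintype α] (s : Set α) (p : α → Prop)
    [DecidablePred p] (h : ∀ x, x ∈ s ↔ p x) :
    s.ncard = (Finset.univ.filter p).card := by
  classical
  rw [Set.ncard_eq_toFinset_card']
  congr 1
  ext x
  simp [h x]

end helpers


/-- For a connected marked graph with half-edges and a proper vertex subset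
`𝒱`, in ℤ:
`Σ_{v∈𝒱}(|ε⁻¹(v)| − 3) + |F†_γ(𝒱)| + |E_γ(𝒱)| + |π₀(γ,𝒱)|
  ≥ 3·(|E_γ(𝒱)| − |𝒱| + |π₀(γ,𝒱)|)`,
where `|ε⁻¹(v)|` counts the marked labels and flags carried by `v`. -/
theorem stmt8 {V F L : Type*} [Fintype V] [Fintype F] [Fintype L]
    (ε : F → V) (ϑ : F → F) (εS : L → V)
    (hinv : Function.Involutive ϑ) (hfpf : ∀ f, ϑ f ≠ f)
    (hconn : IsConnectedGraph ε ϑ)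
    (𝒱 : Set V) (h𝒱 : 𝒱 ≠ Set.univ) :
    3 * (((edgesIn ε ϑ 𝒱).ncard : ℤ) - 𝒱.ncard + (pi0 ε ϑ 𝒱).ncard) ≤
      (∑ v ∈ 𝒱.toFinite.toFinset,
          ((({s : L | εS s = v}.ncard : ℤ) + ({f : F | ε f = v}.ncard : ℤ)) - 3))
        + (Fdagger ε ϑ εS 𝒱).ncard + (edgesIn ε ϑ 𝒱).ncard + (pi0 ε ϑ 𝒱).ncard := by
  classical
  set 𝒱fin := 𝒱.toFinite.toFinset with h𝒱fin
  have hmemV : ∀ v, v ∈ 𝒱fin ↔ v ∈ 𝒱 := fun v => Set.Finite.mem_toFinset _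
  set Lfin : Finset L := Finset.univ.filter (fun s => εS s ∈ 𝒱) with hLfin
  set Ffin : Finset F := Finset.univ.filter (fun f => ε f ∈ 𝒱) with hFfin
  set Ifin : Finset F := Finset.univ.filter (fun f => ε f ∈ 𝒱 ∧ ε (ϑ f) ∈ 𝒱) with hIfin
  set Bfin : Finset F := Finset.univ.filter (fun f => ε f ∈ 𝒱 ∧ ε (ϑ f) ∉ 𝒱) with hBfin
  set Dfin : Finset F := Finset.univ.filter (fun f => f ∈ Fdagger ε ϑ εS 𝒱) with hDfin
  set Pfin : Finset (Set V) := Finset.univ.filter (fun C => C ∈ pi0 ε ϑ 𝒱) with hPfin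
  set Efin : Finset (Set F) := Finset.univ.filter (fun e => e ∈ edgesIn ε ϑ 𝒱) with hEfin
  -- ncard conversions
  have hEc : (edgesIn ε ϑ 𝒱).ncard = Efin.card := by
    rw [hEfin]; exact ncard_filter (edgesIn ε ϑ 𝒱) _ (fun _ => Iff.rfl)
  have hPc : (pi0 ε ϑ 𝒱).ncard = Pfin.card := by
    rw [hPfin]; exact ncard_filter (pi0 ε ϑ 𝒱) _ (fun _ => Iff.rfl)
  have hDc : (Fdagger ε ϑ εS 𝒱).ncard = Dfin.card := by
    rw [hDfin]; exact ncard_filter (Fdagger ε ϑ εS 𝒱) _ (fun _ => Iff.rfl)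
  have hVc : 𝒱.ncard = 𝒱fin.card := Set.ncard_eq_toFinset_card _ _
  -- (a) label sum
  have ha : ∑ v ∈ 𝒱fin, {s : L | εS s = v}.ncard = Lfin.card := by
    rw [Finset.card_eq_sum_card_fiberwise (f := εS) (t := 𝒱fin)
      (fun s hs => (hmemV _).mpr (Finset.mem_filter.mp hs).2)]
    refine Finset.sum_congr rfl fun v hv => ?_
    rw [ncard_filter {s : L | εS s = v} (fun s => εS s = v) (fun _ => Iff.rfl)]
    congr 1
    ext s
    simp only [Finset.mem_filter, Finset.mem_univ, true_and]
    exact ⟨fun h => ⟨h ▸ (hmemV v).mp hv, h⟩, fun h => h.2⟩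
  -- (b) flag sum
  have hb : ∑ v ∈ 𝒱fin, {f : F | ε f = v}.ncard = Ffin.card := by
    rw [Finset.card_eq_sum_card_fiberwise (f := ε) (t := 𝒱fin)
      (fun f hf => (hmemV _).mpr (Finset.mem_filter.mp hf).2)]
    refine Finset.sum_congr rfl fun v hv => ?_
    rw [ncard_filter {f : F | ε f = v} (fun f => ε f = v) (fun _ => Iff.rfl)]
    congr 1
    ext f
    simp only [Finset.mem_filter, Finset.mem_univ, true_and]
    exact ⟨fun h => ⟨h ▸ (hmemV v).mp hv, h⟩, fun h => h.2⟩
  -- (c) split flags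
  have hsplit : Ffin.card = Ifin.card + Bfin.card := by
    rw [hFfin, hIfin, hBfin]
    rw [← Finset.filter_filter, ← Finset.filter_filter]
    exact (Finset.card_filter_add_card_filter_not
      (p := fun f => ε (ϑ f) ∈ 𝒱)).symm
  -- (c') 2-to-1 count
  have hIc : Ifin.card = 2 * Efin.card := by
    rw [Finset.card_eq_sum_card_fiberwise (f := fun f => ({f, ϑ f} : Set F)) (t := Efin)
      (fun f hf => by
        rw [hEfin, Finset.mem_coe, Finset.mem_filter]
        obtain ⟨-, h1, h2⟩ := Finset.mem_filter.mp hf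
        exact ⟨Finset.mem_univ _, f, rfl, h1, h2⟩)]
    rw [Finset.sum_congr rfl (fun e he => ?_), Finset.sum_const, smul_eq_mul, mul_comm]
    obtain ⟨-, f₀, rfl, hf1, hf2⟩ := Finset.mem_filter.mp he
    have : Ifin.filter (fun f => ({f, ϑ f} : Set F) = {f₀, ϑ f₀}) = {f₀, ϑ f₀} := by
      ext f
      simp only [Finset.mem_filter, hIfin, Finset.mem_univ, true_and,
        Finset.mem_insert, Finset.mem_singleton]
      constructor
      · rintro ⟨-, h⟩
        have : f ∈ ({f₀, ϑ f₀} : Set F) := h ▸ (by left; rfl)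
        simpa using this
      · rintro (rfl | rfl)
        · exact ⟨⟨hf1, hf2⟩, rfl⟩
        · refine ⟨⟨hf2, by rw [hinv]; exact hf1⟩, ?_⟩
          rw [hinv]
          exact Set.pair_comm _ _
    rw [this, Finset.card_pair (Ne.symm (hfpf f₀))]
  -- key per-component bound
  have key : ∀ C ∈ Pfin, 2 ≤ (Bfin.filter (fun f => component ε ϑ 𝒱 (ε f) = C)).card
      + (Lfin.filter (fun s => component ε ϑ 𝒱 (εS s) = C)).card
      + (Dfin.filter (fun f => component ε ϑ 𝒱 (ε (ϑ f)) = C)).card := by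
    intro C hC
    obtain ⟨v, hv, rfl⟩ := (Finset.mem_filter.mp hC).2
    obtain ⟨u, hu⟩ : ∃ u, u ∉ 𝒱 := by
      by_contra h
      push_neg at h
      exact h𝒱 (Set.eq_univ_of_forall h)
    have hvu : v ≠ u := fun h => hu (h ▸ hv)
    have hchain' : Relation.ReflTransGen
        (fun a b => ∃ g ∈ (Set.univ : Set F), ε g = a ∧ ε (ϑ g) = b) v u :=
      Relation.ReflTransGen.mono (r := Step ε ϑ) (fun a b hab => by
        obtain ⟨f, h1, h2⟩ := hab
        exact ⟨f, trivial, h1, h2⟩) _ _ (hconn v u hvu)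
    have hvself : v ∈ component ε ϑ 𝒱 v := Relation.ReflTransGen.refl
    have huC : u ∉ component ε ϑ 𝒱 v := fun h => hu (mem_of_mem_component hv h)
    obtain ⟨g, -, hg1, hg2⟩ := escape hchain' hvself huC
    have hgV : ε g ∈ 𝒱 := mem_of_mem_component hv hg1
    have hg2V : ε (ϑ g) ∉ 𝒱 := fun h => hg2 (extend_component hg1 hv h)
    have hgB : g ∈ Bfin.filter (fun f => component ε ϑ 𝒱 (ε f) = component ε ϑ 𝒱 v) := by
      simp only [Finset.mem_filter, hBfin, Finset.mem_univ, true_and]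
      exact ⟨⟨hgV, hg2V⟩, component_eq hinv hg1⟩
    have hbf1 : 1 ≤ (Bfin.filter (fun f => component ε ϑ 𝒱 (ε f) = component ε ϑ 𝒱 v)).card :=
      Finset.card_pos.mpr ⟨g, hgB⟩
    rcases Nat.lt_or_ge (Bfin.filter (fun f => component ε ϑ 𝒱 (ε f) = component ε ϑ 𝒱 v)).card 2
      with hb2 | hb2
    · rcases Nat.eq_zero_or_pos
        (Lfin.filter (fun s => component ε ϑ 𝒱 (εS s) = component ε ϑ 𝒱 v)).card with hl0 | hl1
      · -- show ϑ g ∈ Dfin-fiber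
        have huniq : ∀ h ∈ Bfin.filter
            (fun f => component ε ϑ 𝒱 (ε f) = component ε ϑ 𝒱 v), h = g := by
          intro h hh
          exact Finset.card_le_one.mp (by omega) h hh g hgB
        have hlf0 := Finset.card_eq_zero.mp hl0
        have hnos : ∀ s, εS s ∉ component ε ϑ 𝒱 v := by
          intro s hs
          have : s ∈ Lfin.filter (fun s => component ε ϑ 𝒱 (εS s) = component ε ϑ 𝒱 v) := by
            simp only [Finset.mem_filter, hLfin, Finset.mem_univ, true_and]
            exact ⟨mem_of_mem_component hv hs, component_eq hinv hs⟩
          rw [hlf0] at this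
          exact absurd this (Finset.notMem_empty s)
        have hdisc : Disconnects ε ϑ (component ε ϑ 𝒱 v) (ϑ g) := by
          intro w hw w' hw' hchain2
          have hchain2' : Relation.ReflTransGen
              (fun a b => ∃ h ∈ {h : F | h ≠ ϑ g ∧ h ≠ ϑ (ϑ g)}, ε h = a ∧ ε (ϑ h) = b) w w' :=
            Relation.ReflTransGen.mono (r := StepAvoid ε ϑ (ϑ g)) (fun a b hab => by
              obtain ⟨h, h1, h2, h3, h4⟩ := hab
              exact ⟨h, ⟨h1, h2⟩, h3, h4⟩) _ _ hchain2
          obtain ⟨h, ⟨hne1, hne2⟩, hh1, hh2⟩ := escape hchain2' hw hw'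
          have hhV : ε (ϑ h) ∉ 𝒱 := fun hmem => hh2 (extend_component hh1 hv hmem)
          have hhB : h ∈ Bfin.filter
              (fun f => component ε ϑ 𝒱 (ε f) = component ε ϑ 𝒱 v) := by
            simp only [Finset.mem_filter, hBfin, Finset.mem_univ, true_and]
            exact ⟨⟨mem_of_mem_component hv hh1, hhV⟩, component_eq hinv hh1⟩
          rw [hinv] at hne2
          exact hne2 (huniq h hhB)
        have hcg : component ε ϑ 𝒱 (ε (ϑ (ϑ g))) = component ε ϑ 𝒱 v := by
          rw [hinv]
          exact component_eq hinv hg1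
        have hdg : ϑ g ∈ Dfin.filter
            (fun f => component ε ϑ 𝒱 (ε (ϑ f)) = component ε ϑ 𝒱 v) := by
          simp only [Finset.mem_filter, hDfin, Finset.mem_univ, true_and]
          refine ⟨⟨⟨hg2V, ?_, ?_⟩, ?_⟩, hcg⟩
          · rw [hinv]; exact hgV
          · rw [hcg]; exact hdisc
          · rw [hcg]; exact hnos
        have hdf1 : 1 ≤ (Dfin.filter
            (fun f => component ε ϑ 𝒱 (ε (ϑ f)) = component ε ϑ 𝒱 v)).card :=
          Finset.card_pos.mpr ⟨ϑ g, hdg⟩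
        omega
      · omega
    · omega
  -- (d) 2 * P ≤ B + L + D
  have hd : 2 * Pfin.card ≤ Bfin.card + Lfin.card + Dfin.card := by
    have e1 : Bfin.card = ∑ C ∈ Pfin, (Bfin.filter
        (fun f => component ε ϑ 𝒱 (ε f) = C)).card :=
      Finset.card_eq_sum_card_fiberwise (fun f hf => by
        rw [hPfin, Finset.mem_coe, Finset.mem_filter]
        exact ⟨Finset.mem_univ _, ε f, (Finset.mem_filter.mp hf).2.1, rfl⟩)
    have e2 : Lfin.card = ∑ C ∈ Pfin, (Lfin.filter
        (fun s => component ε ϑ 𝒱 (εS s) = C)).card :=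
      Finset.card_eq_sum_card_fiberwise (fun s hs => by
        rw [hPfin, Finset.mem_coe, Finset.mem_filter]
        exact ⟨Finset.mem_univ _, εS s, (Finset.mem_filter.mp hs).2, rfl⟩)
    have e3 : Dfin.card = ∑ C ∈ Pfin, (Dfin.filter
        (fun f => component ε ϑ 𝒱 (ε (ϑ f)) = C)).card :=
      Finset.card_eq_sum_card_fiberwise (fun f hf => by
        rw [hPfin, Finset.mem_coe, Finset.mem_filter]
        exact ⟨Finset.mem_univ _, ε (ϑ f), (Finset.mem_filter.mp hf).2.1.2.1, rfl⟩)
    calc 2 * Pfin.card = ∑ _C ∈ Pfin, 2 := by rw [Finset.sum_const, smul_eq_mul, mul_comm]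
      _ ≤ ∑ C ∈ Pfin, ((Bfin.filter (fun f => component ε ϑ 𝒱 (ε f) = C)).card
          + (Lfin.filter (fun s => component ε ϑ 𝒱 (εS s) = C)).card
          + (Dfin.filter (fun f => component ε ϑ 𝒱 (ε (ϑ f)) = C)).card) :=
        Finset.sum_le_sum key
      _ = Bfin.card + Lfin.card + Dfin.card := by
        rw [Finset.sum_add_distrib, Finset.sum_add_distrib, ← e1, ← e2, ← e3]
  -- assemble
  have hsum : ∑ v ∈ 𝒱fin, ((({s : L | εS s = v}.ncard : ℤ) + ({f : F | ε f = v}.ncard : ℤ)) - 3)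
      = (Lfin.card : ℤ) + (Ffin.card : ℤ) - 3 * 𝒱fin.card := by
    rw [Finset.sum_sub_distrib, Finset.sum_add_distrib, Finset.sum_const, ← Nat.cast_sum,
      ← Nat.cast_sum, ha, hb]
    ring
  rw [hEc, hPc, hDc, hVc, hsum]
  have hsplit' := hsplit
  have hIc' := hIc
  have hd' := hd
  zify at hsplit' hIc' hd'
  linarith
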